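/- Let θ: G → S be a unital premorphism, T an inverse intermediate extension of G̃^R with E(S) (Supp(T),θ)-meet complete, and θ*(A,g)=I_A θ(g) the canonical extension. Then any semigroup homomorphism κ: T → S extending θ satisfies κ(A,g) ≤ θ*(A,g) in the natural partial order, for all (A,g) ∈ T. -/

import Mathlib

variable {G : Type*} [Group G]

/-- `P*(G)`: the nonempty subsets of `G` (a semilattice under union). -/
abbrev PStar (G : Type*) [Group G] := {A : Set G // A.Nonempty}

/-- The semidirect product `P*(G) ⋊ G` (as a set: `P*(G) × G`). -/
abbrev SD (G : Type*) [Group G] := PStar G × G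

/-- Multiplication `(A,g)(B,h) = (A ∪ gB, gh)` in `P*(G) ⋊ G`. -/
def sdMul (x y : SD G) : SD G :=
  (⟨x.1.1 ∪ (fun a => x.2 * a) '' y.1.1, x.1.2.inl⟩, x.2 * y.2)

/-- The inverse `(g⁻¹A, g⁻¹)` of `(A,g)` in `P*(G) ⋊ G`. -/
def sdInv (x : SD G) : SD G :=
  (⟨(fun a => x.2⁻¹ * a) '' x.1.1, x.1.2.image _⟩, x.2⁻¹)

/-- The Birget–Rhodes expansion `G̃^R` sitting inside `P*(G) ⋊ G`:
pairs `(A,g)` with `A` finite and `{1,g} ⊆ A`. -/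
def BRset (G : Type*) [Group G] : Set (SD G) :=
  {x | x.1.1.Finite ∧ (1 : G) ∈ x.1.1 ∧ x.2 ∈ x.1.1}

/-- The element `({1,g}, g)` of `G̃^R`. -/
def iotaBR (g : G) : SD G := (⟨{1, g}, ⟨1, Or.inl rfl⟩⟩, g)

/-- The support of a subset `T` of `P*(G) ⋊ G`. -/
def Supp (T : Set (SD G)) : Set (PStar G) := {A | ∃ g : G, (A, g) ∈ T}

/-- An inverse monoid. -/
class InverseMonoid (S : Type*) extends Monoid S, Inv S where
  mul_inv_mul : ∀ a : S, a * a⁻¹ * a = a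
  inv_mul_inv : ∀ a : S, a⁻¹ * a * a⁻¹ = a⁻¹
  inv_unique : ∀ a b : S, a * b * a = a → b * a * b = b → b = a⁻¹

/-- A unital premorphism from a group to an inverse monoid. -/
def IsUnitalPremorphism {G S : Type*} [Group G] [InverseMonoid S] (θ : G → S) : Prop :=
  θ 1 = 1 ∧ (∀ g : G, θ g⁻¹ = (θ g)⁻¹) ∧
    ∀ g h : G, θ g⁻¹ * θ g * θ h = θ g⁻¹ * θ (g * h)

/-- The natural partial order on an inverse monoid: `s ≤ t` iff `s = e * t`
for some idempotent `e`. -/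
def natLe {S : Type*} [InverseMonoid S] (s t : S) : Prop :=
  ∃ e : S, e * e = e ∧ s = e * t

/-- `m` is the meet (greatest lower bound) of `X` with respect to the
natural partial order. -/
def IsMeet {S : Type*} [InverseMonoid S] (X : Set S) (m : S) : Prop :=
  (∀ x ∈ X, natLe m x) ∧ ∀ b : S, (∀ x ∈ X, natLe b x) → natLe b m

/-- The family `{θ(a)θ(a)⁻¹ : a ∈ A}` of idempotents. -/
def thFam {G S : Type*} [Group G] [InverseMonoid S] (θ : G → S) (A : Set G) : Set S :=
  (fun a => θ a * (θ a)⁻¹) '' A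


section Aux
variable {G : Type*} [Group G]

lemma sd_ext' {x y : SD G} (h1 : x.1.1 = y.1.1) (h2 : x.2 = y.2) : x = y := by
  obtain ⟨⟨Ax, hx⟩, gx⟩ := x
  obtain ⟨⟨Ay, hy⟩, gy⟩ := y
  simp only at h1 h2
  subst h1; subst h2; rfl

lemma iotaBR_mem (g : G) : iotaBR g ∈ BRset G := by
  refine ⟨?_, ?_, ?_⟩
  · exact (Set.finite_singleton g).insert 1
  · simp [iotaBR]
  · simp [iotaBR]

lemma sd_E1 (z : SD G) : sdMul z (sdMul (sdInv z) z) = z := by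
  apply sd_ext'
  · ext y
    simp [sdMul, sdInv, Set.image_union, Set.image_image]
  · simp [sdMul, sdInv]

lemma sd_E2 (z : SD G) : sdMul (sdInv z) (sdMul z (sdInv z)) = sdInv z := by
  apply sd_ext'
  · ext y
    simp [sdMul, sdInv, Set.image_union, Set.image_image]
  · simp [sdMul, sdInv]

end Aux

/-- with `θ`, `T`, `I` as in the extension theorem, any semigroup
homomorphism `κ : T → S` extending `θ` satisfies `κ(A,g) ≤ θ*(A,g) = I_A θ(g)`
in the natural partial order. -/
theorem stmt8 {G S : Type*} [Group G] [InverseMonoid S] (θ : G → S)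
    (hθ : IsUnitalPremorphism θ)
    (T : Set (SD G))
    (hmul : ∀ x ∈ T, ∀ y ∈ T, sdMul x y ∈ T)
    (hinv : ∀ x ∈ T, sdInv x ∈ T)
    (hBR : BRset G ⊆ T)
    (I : Set G → S)
    (hI : ∀ A : PStar G, A ∈ Supp T → IsMeet (thFam θ A.1) (I A.1))
    (κ : SD G → S)
    (hκmul : ∀ x ∈ T, ∀ y ∈ T, κ (sdMul x y) = κ x * κ y)
    (hκext : ∀ g : G, κ (iotaBR g) = θ g) :
    ∀ x ∈ T, natLe (κ x) (I x.1.1 * θ x.2) := by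
  have hκinv : ∀ z ∈ T, κ (sdInv z) = (κ z)⁻¹ := by
    intro z hz
    have hzi : sdInv z ∈ T := hinv z hz
    have m1 : κ z * (κ (sdInv z) * κ z) = κ z := by
      rw [← hκmul _ hzi _ hz, ← hκmul _ hz _ (hmul _ hzi _ hz), sd_E1]
    have m2 : κ (sdInv z) * (κ z * κ (sdInv z)) = κ (sdInv z) := by
      rw [← hκmul _ hz _ hzi, ← hκmul _ hzi _ (hmul _ hz _ hzi), sd_E2]
    exact InverseMonoid.inv_unique (κ z) (κ (sdInv z))
      (by rw [mul_assoc]; exact m1) (by rw [mul_assoc]; exact m2)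
  rintro ⟨⟨A, hA⟩, g⟩ hx
  set x : SD G := (⟨A, hA⟩, g) with hxdef
  have hinvT : sdInv x ∈ T := hinv x hx
  have hι1 : iotaBR (1 : G) ∈ T := hBR (iotaBR_mem 1)
  have hκι1 : κ (iotaBR (1 : G)) = 1 := by rw [hκext 1, hθ.1]
  -- C = ι(1) * (x⁻¹ x)
  have hCT : sdMul (iotaBR 1) (sdMul (sdInv x) x) ∈ T :=
    hmul _ hι1 _ (hmul _ hinvT _ hx)
  have hκC : κ (sdMul (iotaBR 1) (sdMul (sdInv x) x)) = (κ x)⁻¹ * κ x := by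
    rw [hκmul _ hι1 _ (hmul _ hinvT _ hx), hκι1, one_mul, hκmul _ hinvT _ hx, hκinv x hx]
  -- D = (x * C) * x⁻¹
  have hDT : sdMul (sdMul x (sdMul (iotaBR 1) (sdMul (sdInv x) x))) (sdInv x) ∈ T :=
    hmul _ (hmul _ hx _ hCT) _ hinvT
  have hκD : κ (sdMul (sdMul x (sdMul (iotaBR 1) (sdMul (sdInv x) x))) (sdInv x))
      = κ x * (κ x)⁻¹ := by
    rw [hκmul _ (hmul _ hx _ hCT) _ hinvT, hκmul _ hx _ hCT, hκC, hκinv x hx]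
    rw [← mul_assoc, InverseMonoid.mul_inv_mul]
  -- F = ι(1) * D = (insert 1 (insert g A), 1)
  have hFT : sdMul (iotaBR 1) (sdMul (sdMul x (sdMul (iotaBR 1) (sdMul (sdInv x) x))) (sdInv x)) ∈ T :=
    hmul _ hι1 _ hDT
  have hκF : κ (sdMul (iotaBR 1) (sdMul (sdMul x (sdMul (iotaBR 1) (sdMul (sdInv x) x))) (sdInv x)))
      = κ x * (κ x)⁻¹ := by
    rw [hκmul _ hι1 _ hDT, hκι1, one_mul, hκD]
  have hFval : sdMul (iotaBR 1) (sdMul (sdMul x (sdMul (iotaBR 1) (sdMul (sdInv x) x))) (sdInv x))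
      = ((⟨insert 1 (insert g A), Set.insert_nonempty _ _⟩, (1 : G)) : SD G) := by
    apply sd_ext'
    · show _ = insert (1:G) (insert g A)
      ext y
      simp [sdMul, sdInv, iotaBR, x, Set.image_union, Set.image_image,
        Set.image_insert_eq, inv_mul_eq_one]
      aesop
    · simp [sdMul, sdInv, iotaBR]
  set Fc : SD G := ((⟨insert 1 (insert g A), Set.insert_nonempty _ _⟩, (1 : G)) : SD G) with hFc
  have hFcT : Fc ∈ T := hFval ▸ hFT
  have hκFc : κ Fc = κ x * (κ x)⁻¹ := hFval ▸ hκF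
  -- key : Fc * ι(g) = Fc * x
  have hkey : sdMul Fc (iotaBR g) = sdMul Fc x := by
    apply sd_ext'
    · ext y
      simp [sdMul, iotaBR, Fc, x, Set.image_insert_eq]
      aesop
    · simp [sdMul, iotaBR, Fc, x]
  have hιg : iotaBR g ∈ T := hBR (iotaBR_mem g)
  have hs : κ x = (κ x * (κ x)⁻¹) * θ g := by
    have h1 : κ Fc * θ g = κ Fc * κ x := by
      rw [← hκext g, ← hκmul _ hFcT _ hιg, ← hκmul _ hFcT _ hx, hkey]
    rw [← hκFc, h1, hκFc, InverseMonoid.mul_inv_mul]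
  -- absorption of ({1,a},1) for a ∈ A
  have habs : ∀ a ∈ A, (κ x * (κ x)⁻¹) * (θ a * (θ a)⁻¹) = κ x * (κ x)⁻¹ := by
    intro a ha
    have hιa : iotaBR a ∈ T := hBR (iotaBR_mem a)
    have hιaT : sdMul (iotaBR a) (sdInv (iotaBR a)) ∈ T := hmul _ hιa _ (hinv _ hιa)
    have habsSD : sdMul Fc (sdMul (iotaBR a) (sdInv (iotaBR a))) = Fc := by
      apply sd_ext'
      · ext y
        simp [sdMul, sdInv, iotaBR, Fc, Set.image_insert_eq, Set.image_image]
        rintro rfl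
        exact Or.inr (Or.inr ha)
      · simp [sdMul, sdInv, iotaBR, Fc]
    have := hκmul _ hFcT _ hιaT
    rw [habsSD, hκFc, hκmul _ hιa _ (hinv _ hιa), hκinv _ hιa, hκext a] at this
    exact this.symm
  have hE : (κ x * (κ x)⁻¹) * (κ x * (κ x)⁻¹) = κ x * (κ x)⁻¹ := by
    rw [← mul_assoc, InverseMonoid.mul_inv_mul]
  have hlow : natLe (κ x * (κ x)⁻¹) (I A) := by
    refine (hI ⟨A, hA⟩ ⟨g, hx⟩).2 _ ?_
    rintro y ⟨a, ha, rfl⟩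
    exact ⟨_, hE, (habs a ha).symm⟩
  obtain ⟨e, he, hEe⟩ := hlow
  exact ⟨e, he, by rw [hs, hEe, mul_assoc]⟩
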